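/- Let Γ^k_{ij} ∈ k[[x^1,…,x^d]] (1 ≤ i,j,k ≤ d) satisfy Γ^k_{ij} = Γ^k_{ji}. Then for all homogeneous f, g ∈ 𝒜, (−1)^{|f|} Σ_{i,j,k} Γ^k_{ij} ψ_k (∂f/∂ψ_j)(∂g/∂ψ_i) + (−1)^{|f||g|+|g|} Σ_{i,j,k} Γ^k_{ij} ψ_k (∂g/∂ψ_j)(∂f/∂ψ_i) = 0. -/

import Mathlib

open Finset

noncomputable section
namespace Glob

variable {d : ℕ} {k : Type*} [CommRing k] [Algebra ℚ k]

/-- The power series ring `k[[x^1,…,x^d,y^1,…,y^d]]`; `Sum.inl i` is `x^i`, `Sum.inr i` is `y^i`. -/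
abbrev PS (d : ℕ) (k : Type*) [CommRing k] := MvPowerSeries (Fin d ⊕ Fin d) k

/-- The algebra `𝒜 = k[[x,y]] ⊗ Λ(ψ) ⊗ Λ(η)`: an element is encoded by its family of
power-series coefficients at the exterior monomials `ψ_S η_T`. -/
abbrev A (d : ℕ) (k : Type*) [CommRing k] := Finset (Fin d) → Finset (Fin d) → PS d k

def mkPS (f : ((Fin d ⊕ Fin d) →₀ ℕ) → k) : PS d k := f

def cf (m : (Fin d ⊕ Fin d) →₀ ℕ) (φ : PS d k) : k := MvPowerSeries.coeff m φ

/-- Koszul sign for merging two sorted exterior monomials. -/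
def msign (S T : Finset (Fin d)) : ℤ := (-1) ^ (((S ×ˢ T)).filter (fun p => p.2 < p.1)).card

/-- Multiplication in `𝒜` (monomials ordered with all ψ's before all η's). -/
def amul (f g : A d k) : A d k := fun S T =>
  ∑ S1 ∈ S.powerset, ∑ T1 ∈ T.powerset,
    (msign S1 (S \ S1) * msign T1 (T \ T1) * (-1) ^ (T1.card * (S \ S1).card)) •
      (f S1 T1 * g (S \ S1) (T \ T1))

/-- Partial derivative of a formal power series. -/
def pderivPS (j : Fin d ⊕ Fin d) (φ : PS d k) : PS d k :=
  mkPS fun m => (m j + 1 : ℕ) • cf (m + Finsupp.single j 1) φ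

/-- The even derivation `∂/∂x^i`. -/
def dX (i : Fin d) (f : A d k) : A d k := fun S T => pderivPS (Sum.inl i) (f S T)

/-- The even derivation `∂/∂y^i`. -/
def dY (i : Fin d) (f : A d k) : A d k := fun S T => pderivPS (Sum.inr i) (f S T)

/-- The odd derivation `∂/∂ψ_i`. -/
def dPsi (i : Fin d) (f : A d k) : A d k := fun S T =>
  if i ∈ S then 0 else ((-1 : ℤ) ^ (S.filter (· < i)).card) • f (insert i S) T

/-- The odd derivation `∂/∂η^i`. -/
def dEta (i : Fin d) (f : A d k) : A d k := fun S T =>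
  if i ∈ T then 0 else ((-1 : ℤ) ^ (S.card + (T.filter (· < i)).card)) • f S (insert i T)

/-- The generator `ψ_i`. -/
def psiGen (i : Fin d) : A d k := fun S T => if S = {i} ∧ T = ∅ then 1 else 0

/-- The generator `η^i`. -/
def etaGen (i : Fin d) : A d k := fun S T => if S = ∅ ∧ T = {i} then 1 else 0

/-- A power series viewed as an element of `𝒜`. -/
def scalarA (φ : PS d k) : A d k := fun S T => if S = ∅ ∧ T = ∅ then φ else 0

/-- Total `y`-degree of a power-series monomial. -/
def ydeg (m : (Fin d ⊕ Fin d) →₀ ℕ) : ℕ := ∑ i : Fin d, m (Sum.inr i)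

/-- The projection `σ` onto the part of degree `0` in the `y`'s and the `η`'s. -/
def sigmaOp (f : A d k) : A d k := fun S T =>
  if T = (∅ : Finset (Fin d)) then mkPS (fun m => if ydeg m = 0 then cf m (f S T) else 0) else 0

/-- `δ = Σ_i η^i · ∂/∂y^i`. -/
def deltaOp (f : A d k) : A d k := ∑ i : Fin d, amul (etaGen i) (dY i f)

/-- `δ*`, acting as `(1/(p+q)) Σ_a y^a · ∂/∂η^a` on the component of `y`-degree `p`
and `η`-degree `q` (and by `0` when `p = q = 0`). -/
def deltaStar (f : A d k) : A d k := fun S T =>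
  mkPS fun m =>
    if ydeg m + T.card = 0 then 0
    else ((ydeg m + T.card : ℚ))⁻¹ •
      cf m ((∑ a : Fin d, amul (scalarA (MvPowerSeries.X (Sum.inr a))) (dEta a f)) S T)

/-- Projection onto the component of total exterior (`ψ` and `η`) degree `n`. -/
def homogPart (n : ℕ) (f : A d k) : A d k :=
  fun S T => if S.card + T.card = n then f S T else 0

/-- The vertical Schouten bracket on homogeneous elements of degrees `m`, `n`. -/
def vbrHom (m n : ℕ) (f g : A d k) : A d k :=
  ((-1 : ℤ) ^ m) • (∑ i : Fin d, amul (dY i f) (dPsi i g)) +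
  ((-1 : ℤ) ^ (m * n + n)) • (∑ i : Fin d, amul (dY i g) (dPsi i f))

/-- The vertical Schouten bracket, extended bilinearly. -/
def vbr (f g : A d k) : A d k :=
  ∑ m ∈ Finset.range (2 * d + 1), ∑ n ∈ Finset.range (2 * d + 1),
    vbrHom m n (homogPart m f) (homogPart n g)

/-- The Schouten bracket (using `∂/∂x^i`) on homogeneous elements. -/
def sbrHom (m n : ℕ) (f g : A d k) : A d k :=
  ((-1 : ℤ) ^ m) • (∑ i : Fin d, amul (dX i f) (dPsi i g)) +
  ((-1 : ℤ) ^ (m * n + n)) • (∑ i : Fin d, amul (dX i g) (dPsi i f))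

/-- The Schouten bracket, extended bilinearly. -/
def sbr (f g : A d k) : A d k :=
  ∑ m ∈ Finset.range (2 * d + 1), ∑ n ∈ Finset.range (2 * d + 1),
    sbrHom m n (homogPart m f) (homogPart n g)

/-- The de Rham differential `d = Σ_i η^i · ∂/∂x^i`. -/
def dOp (f : A d k) : A d k := ∑ i : Fin d, amul (etaGen i) (dX i f)

/-- The element `Γ = −Σ_{i,j,k} η^i Γ^k_{ij} y^j ψ_k` built from Christoffel symbols. -/
def GammaEl (Γc : Fin d → Fin d → Fin d → PS d k) : A d k :=
  - ∑ i : Fin d, ∑ j : Fin d, ∑ k' : Fin d,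
      amul (scalarA (Γc k' i j * MvPowerSeries.X (Sum.inr j)))
        (amul (etaGen i) (psiGen k'))

/-- The connection `∇ = d + [Γ,−]`. -/
def nabla (Γc : Fin d → Fin d → Fin d → PS d k) (f : A d k) : A d k :=
  dOp f + vbr (GammaEl Γc) f

/-- The curvature element `R = d(Γ) + ½[Γ,Γ]`. -/
def curv (Γc : Fin d → Fin d → Fin d → PS d k) : A d k :=
  dOp (GammaEl Γc) + (2 : ℚ)⁻¹ • vbr (GammaEl Γc) (GammaEl Γc)

/-- The Fedosov differential `D = ∇ − δ + [A,−]`. -/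
def Dop (Γc : Fin d → Fin d → Fin d → PS d k) (Aa : A d k) (f : A d k) : A d k :=
  nabla Γc f - deltaOp f + vbr Aa f

/-- `f` is homogeneous of `η`-degree `q`. -/
def EtaHomog (q : ℕ) (f : A d k) : Prop := ∀ S T, T.card ≠ q → f S T = 0

/-- `f` is homogeneous of total exterior degree `n`. -/
def Homog (n : ℕ) (f : A d k) : Prop := ∀ S T, S.card + T.card ≠ n → f S T = 0

/-- The Christoffel symbols depend only on the `x` variables. -/
def XOnly (Γc : Fin d → Fin d → Fin d → PS d k) : Prop :=
  ∀ i j k' m, ydeg m ≠ 0 → cf m (Γc k' i j) = 0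

/-- Symmetry of the Christoffel symbols in the lower indices. -/
def GSymm (Γc : Fin d → Fin d → Fin d → PS d k) : Prop :=
  ∀ i j k', Γc k' i j = Γc k' j i

/-- Membership in the subalgebra `𝒯 = k[[x]] ⊗ Λ(ψ)`: no `η`'s and no `y`'s. -/
def InT (f : A d k) : Prop :=
  (∀ S T, T ≠ (∅ : Finset (Fin d)) → f S T = 0) ∧
  (∀ S T m, ydeg m ≠ 0 → cf m (f S T) = 0)


/-! ### Auxiliary lemmas for statement 13 -/

lemma neg_one_pow_eq_of_even {x y : ℕ} (h : Even (x + y)) : ((-1 : ℤ)) ^ x = (-1) ^ y := by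
  have h1 : ((-1 : ℤ)) ^ (x + y) = 1 := h.neg_one_pow
  have hyy : Even (y + y) := ⟨y, rfl⟩
  have h2 : ((-1 : ℤ)) ^ (y + y) = 1 := hyy.neg_one_pow
  calc ((-1 : ℤ)) ^ x = (-1) ^ x * ((-1) ^ y * (-1) ^ y) := by
        rw [← pow_add, h2, mul_one]
    _ = ((-1) ^ (x + y)) * (-1) ^ y := by rw [pow_add]; ring
    _ = (-1) ^ y := by rw [h1, one_mul]

lemma card_lt_add {S T : Finset (Fin d)} (h : Disjoint S T) :
    ((S ×ˢ T).filter (fun p => p.2 < p.1)).card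
      + ((T ×ˢ S).filter (fun p => p.2 < p.1)).card = S.card * T.card := by
  have h1 : ((T ×ˢ S).filter (fun p => p.2 < p.1)).card
      = ((S ×ˢ T).filter (fun p => ¬ p.2 < p.1)).card := by
    refine Finset.card_bij' (fun p _ => (p.2, p.1)) (fun p _ => (p.2, p.1)) ?_ ?_ ?_ ?_
    · intro p hp
      simp only [Finset.mem_filter, Finset.mem_product] at hp ⊢
      exact ⟨⟨hp.1.2, hp.1.1⟩, by simpa using le_of_lt hp.2⟩
    · intro p hp
      simp only [Finset.mem_filter, Finset.mem_product, not_lt] at hp ⊢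
      refine ⟨⟨hp.1.2, hp.1.1⟩, lt_of_le_of_ne hp.2 ?_⟩
      intro he
      exact (Finset.disjoint_left.1 h hp.1.1) (he ▸ hp.1.2)
    · intro p _; rfl
    · intro p _; rfl
  rw [h1, Finset.card_filter_add_card_filter_not, Finset.card_product]

lemma amul_zero (f : A d k) : amul f (0 : A d k) = 0 := by
  funext S T
  simp [amul]

lemma zero_amul (f : A d k) : amul (0 : A d k) f = 0 := by
  funext S T
  simp [amul]

lemma amul_smul (c : ℤ) (f g : A d k) : amul f (c • g) = c • amul f g := by
  funext S T
  show _ = c • (amul f g S T)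
  unfold amul
  rw [Finset.smul_sum]
  refine Finset.sum_congr rfl fun S1 _ => ?_
  rw [Finset.smul_sum]
  refine Finset.sum_congr rfl fun T1 _ => ?_
  have hcg : (c • g) (S \ S1) (T \ T1) = c • (g (S \ S1) (T \ T1)) := rfl
  rw [hcg, mul_smul_comm, smul_comm]

lemma dPsi_of_homog_zero {f : A d k} (hf : Homog 0 f) (i : Fin d) :
    dPsi i f = (0 : A d k) := by
  funext S T
  show dPsi i f S T = 0
  unfold dPsi
  split
  · rfl
  · rename_i h
    rw [hf _ _ (by rw [Finset.card_insert_of_notMem h]; omega), smul_zero]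

lemma dPsi_homog {p : ℕ} {f : A d k} (hf : Homog (p + 1) f) (i : Fin d) :
    Homog p (dPsi i f) := by
  intro S T hST
  unfold dPsi
  split
  · rfl
  · rename_i h
    rw [hf _ _ (by rw [Finset.card_insert_of_notMem h]; omega), smul_zero]

lemma amul_comm {p q : ℕ} {f g : A d k} (hf : Homog p f) (hg : Homog q g) :
    amul f g = ((-1 : ℤ) ^ (p * q)) • amul g f := by
  funext S T
  show amul f g S T = ((-1 : ℤ) ^ (p * q)) • (amul g f S T)
  unfold amul
  rw [Finset.smul_sum]
  refine Finset.sum_nbij' (i := fun S1 => S \ S1) (j := fun S1 => S \ S1)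
    ?_ ?_ ?_ ?_ ?_
  · intro S1 hS1; simp
  · intro S1 hS1; simp
  · intro S1 hS1
    exact Finset.sdiff_sdiff_eq_self (Finset.mem_powerset.1 hS1)
  · intro S1 hS1
    exact Finset.sdiff_sdiff_eq_self (Finset.mem_powerset.1 hS1)
  · intro S1 hS1
    have hS1S : S1 ⊆ S := Finset.mem_powerset.1 hS1
    have hSS : S \ (S \ S1) = S1 := Finset.sdiff_sdiff_eq_self hS1S
    rw [Finset.smul_sum]
    refine Finset.sum_nbij' (i := fun T1 => T \ T1) (j := fun T1 => T \ T1)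
      ?_ ?_ ?_ ?_ ?_
    · intro T1 hT1; simp
    · intro T1 hT1; simp
    · intro T1 hT1
      exact Finset.sdiff_sdiff_eq_self (Finset.mem_powerset.1 hT1)
    · intro T1 hT1
      exact Finset.sdiff_sdiff_eq_self (Finset.mem_powerset.1 hT1)
    · intro T1 hT1
      have hT1T : T1 ⊆ T := Finset.mem_powerset.1 hT1
      have hTT : T \ (T \ T1) = T1 := Finset.sdiff_sdiff_eq_self hT1T
      rw [hSS, hTT]
      by_cases hfz : f S1 T1 = 0
      · simp [hfz]
      by_cases hgz : g (S \ S1) (T \ T1) = 0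
      · simp [hgz]
      have hp : S1.card + T1.card = p := by
        by_contra hc; exact hfz (hf _ _ hc)
      have hq : (S \ S1).card + (T \ T1).card = q := by
        by_contra hc; exact hgz (hg _ _ hc)
      rw [smul_smul, mul_comm (g (S \ S1) (T \ T1))]
      congr 1
      -- pure sign identity
      unfold msign
      have ha := card_lt_add (Finset.disjoint_sdiff (s := S1) (t := S))
      have hb := card_lt_add (Finset.disjoint_sdiff (s := T1) (t := T))
      set a1 := ((S1 ×ˢ (S \ S1)).filter (fun p => p.2 < p.1)).card with ha1
      set a2 := (((S \ S1) ×ˢ S1).filter (fun p => p.2 < p.1)).card with ha2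
      set b1 := ((T1 ×ˢ (T \ T1)).filter (fun p => p.2 < p.1)).card with hb1
      set b2 := (((T \ T1) ×ˢ T1).filter (fun p => p.2 < p.1)).card with hb2
      have ha' : a1 + a2 = S1.card * (S \ S1).card := ha
      have hb' : b1 + b2 = T1.card * (T \ T1).card := hb
      rw [show ((-1 : ℤ) ^ a1 * (-1) ^ b1 * (-1) ^ (T1.card * (S \ S1).card))
            = (-1) ^ (a1 + b1 + T1.card * (S \ S1).card) by ring,
        show ((-1 : ℤ) ^ (p * q) * ((-1) ^ a2 * (-1) ^ b2
            * (-1) ^ ((T \ T1).card * S1.card)))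
            = (-1) ^ (p * q + (a2 + b2 + (T \ T1).card * S1.card)) by ring]
      apply neg_one_pow_eq_of_even
      have hpq : p * q = S1.card * (S \ S1).card + (T \ T1).card * S1.card
          + T1.card * (S \ S1).card + T1.card * (T \ T1).card := by
        rw [← hp, ← hq]; ring
      refine ⟨S1.card * (S \ S1).card + (T \ T1).card * S1.card
          + T1.card * (S \ S1).card + T1.card * (T \ T1).card, ?_⟩
      linarith [ha', hb', hpq]

/-- vanishing of the correction term `S`: for `Γ^k_{ij}` symmetric in the
lower indices and homogeneous `f`, `g`,
`(−1)^{|f|} Σ Γ^k_{ij} ψ_k (∂f/∂ψ_j)(∂g/∂ψ_i) + (−1)^{|f||g|+|g|} Σ Γ^k_{ij} ψ_k (∂g/∂ψ_j)(∂f/∂ψ_i) = 0`. -/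
theorem statement13 (d : ℕ) (hd : 1 ≤ d) (k : Type*) [CommRing k] [Algebra ℚ k]
    (Γc : Fin d → Fin d → Fin d → PS d k) (hx : XOnly Γc) (hsym : GSymm Γc)
    (m n : ℕ) (f g : A d k) (hf : Homog m f) (hg : Homog n g) :
    ((-1 : ℤ) ^ m) •
        (∑ i : Fin d, ∑ j : Fin d, ∑ k' : Fin d,
          amul (scalarA (Γc k' i j))
            (amul (psiGen k') (amul (dPsi j f) (dPsi i g)))) +
      ((-1 : ℤ) ^ (m * n + n)) •
        (∑ i : Fin d, ∑ j : Fin d, ∑ k' : Fin d,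
          amul (scalarA (Γc k' i j))
            (amul (psiGen k') (amul (dPsi j g) (dPsi i f)))) = 0 := by
  classical
  by_cases hm : m = 0
  · subst hm
    have hdf : ∀ j : Fin d, dPsi j f = (0 : A d k) := fun j => dPsi_of_homog_zero hf j
    simp [hdf, amul_zero, zero_amul]
  by_cases hn : n = 0
  · subst hn
    have hdg : ∀ j : Fin d, dPsi j g = (0 : A d k) := fun j => dPsi_of_homog_zero hg j
    simp [hdg, amul_zero, zero_amul]
  obtain ⟨m', rfl⟩ : ∃ m', m = m' + 1 := ⟨m - 1, by omega⟩
  obtain ⟨n', rfl⟩ : ∃ n', n = n' + 1 := ⟨n - 1, by omega⟩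
  have h2 : (∑ i : Fin d, ∑ j : Fin d, ∑ k' : Fin d,
        amul (scalarA (Γc k' i j))
          (amul (psiGen k') (amul (dPsi j g) (dPsi i f))))
      = ((-1 : ℤ) ^ (n' * m')) • (∑ i : Fin d, ∑ j : Fin d, ∑ k' : Fin d,
        amul (scalarA (Γc k' i j))
          (amul (psiGen k') (amul (dPsi j f) (dPsi i g)))) := by
    rw [Finset.sum_comm, Finset.smul_sum]
    refine Finset.sum_congr rfl fun i _ => ?_
    rw [Finset.smul_sum]
    refine Finset.sum_congr rfl fun j _ => ?_
    rw [Finset.smul_sum]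
    refine Finset.sum_congr rfl fun k'' _ => ?_
    rw [hsym j i k'',
      amul_comm (dPsi_homog hg i) (dPsi_homog hf j),
      amul_smul, amul_smul]
  rw [h2, smul_smul, ← add_smul]
  have hc : ((-1 : ℤ) ^ (m' + 1)
      + (-1 : ℤ) ^ ((m' + 1) * (n' + 1) + (n' + 1)) * (-1) ^ (n' * m')) = 0 := by
    have hE : ((-1 : ℤ)) ^ ((m' + 1) * (n' + 1) + (n' + 1) + n' * m') = (-1) ^ m' :=
      neg_one_pow_eq_of_even ⟨m' * n' + n' + 1 + m', by ring⟩
    rw [← pow_add, hE, pow_succ]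
    ring
  rw [hc, zero_smul]

end Glob
end
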